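/- There exists an absolute constant C > 0 such that for every finite set A of real numbers with |A| ≥ 2, the number of 6-tuples (a₁,a₂,a₃,b₁,b₂,b₃) ∈ A⁶ such that 0,a₁,a₂,a₃ are pairwise distinct, 0,b₁,b₂,b₃ are pairwise distinct, and X(0,a₁,a₂,a₃) = X(0,b₁,b₂,b₃), is at most C·|A|⁴·log|A|. -/

import Mathlib

/-- The cross ratio of four reals. -/
noncomputable def crossRatio (a b c d : ℝ) : ℝ := (a - b) * (c - d) / ((b - c) * (a - d))

open Finset

namespace E1Aux

variable (B : Finset ℝ)

/-- Grid points on the nonvertical line `y = m x + c`. -/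
noncomputable def pts (m c : ℝ) : Finset (ℝ × ℝ) :=
  (B ×ˢ B).filter (fun p => p.2 = m * p.1 + c)

lemma mem_pts {B : Finset ℝ} {m c : ℝ} {p : ℝ × ℝ} :
    p ∈ pts B m c ↔ p.1 ∈ B ∧ p.2 ∈ B ∧ p.2 = m * p.1 + c := by
  simp [pts, Finset.mem_filter, Finset.mem_product, and_assoc]

lemma pts_inj {B : Finset ℝ} {m c : ℝ} {p q : ℝ × ℝ} (hp : p ∈ pts B m c) (hq : q ∈ pts B m c)
    (h : p.1 = q.1) : p = q := by
  rw [mem_pts] at hp hq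
  exact Prod.ext h (by rw [hp.2.2, hq.2.2, h])

lemma card_pts_le (m c : ℝ) : (pts B m c).card ≤ B.card := by
  apply Finset.card_le_card_of_injOn (fun p => p.1)
  · intro p hp; exact (mem_pts.1 hp).1
  · intro p hp q hq h
    exact pts_inj hp hq h

/-- rank of `x` among elements of `B`. -/
noncomputable def rnk (x : ℝ) : ℕ := (B.filter (fun y => y < x)).card

lemma rnk_mono {x y : ℝ} (h : x ≤ y) : rnk B x ≤ rnk B y := by
  apply Finset.card_le_card
  intro z hz
  rw [Finset.mem_filter] at hz ⊢
  exact ⟨hz.1, lt_of_lt_of_le hz.2 h⟩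

lemma rnk_strict {x y : ℝ} (hx : x ∈ B) (h : x < y) : rnk B x < rnk B y := by
  apply Finset.card_lt_card
  rw [Finset.ssubset_iff_of_subset]
  · exact ⟨x, by simp [Finset.mem_filter, hx, h], by simp [Finset.mem_filter]⟩
  · intro z hz
    rw [Finset.mem_filter] at hz ⊢
    exact ⟨hz.1, hz.2.trans h⟩

lemma rnk_injOn : Set.InjOn (rnk B) B := by
  intro x hx y hy h
  rcases lt_trichotomy x y with hlt | he | hlt
  · exact absurd h (rnk_strict B hx hlt).ne
  · exact he
  · exact absurd h.symm (rnk_strict B hy hlt).ne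

lemma rnk_lt {x : ℝ} (hx : x ∈ B) : rnk B x < B.card := by
  apply Finset.card_lt_card
  rw [Finset.ssubset_iff_of_subset (Finset.filter_subset _ _)]
  exact ⟨x, hx, by simp [Finset.mem_filter]⟩

/-- Block index of `x` with blocks of size `s`. -/
noncomputable def ph (s : ℕ) (x : ℝ) : ℕ := rnk B x / s

lemma ph_mono (s : ℕ) {x y : ℝ} (h : x ≤ y) : ph B s x ≤ ph B s y :=
  Nat.div_le_div_right (rnk_mono B h)

lemma ph_lt {B : Finset ℝ} {s r : ℕ} (hs : 0 < s) (hrs : B.card ≤ r * s) {x : ℝ} (hx : x ∈ B) :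
    ph B s x < r := by
  rw [ph, Nat.div_lt_iff_lt_mul hs]
  exact lt_of_lt_of_le (rnk_lt B hx) hrs

lemma card_fiber_le (s : ℕ) (hs : 0 < s) (i : ℕ) :
    (B.filter (fun x => ph B s x = i)).card ≤ s := by
  have h : (B.filter (fun x => ph B s x = i)).card ≤ (Finset.Ico (i * s) (i * s + s)).card := by
    apply Finset.card_le_card_of_injOn (rnk B)
    · intro x hx
      rw [Finset.mem_coe, Finset.mem_filter] at hx
      rw [Finset.mem_coe, Finset.mem_Ico]
      constructor
      · rw [← hx.2]; exact Nat.div_mul_le_self _ _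
      · have hd : rnk B x / s = i := hx.2
        have h1 : s * i + rnk B x % s = rnk B x := by
          rw [← hd]; exact Nat.div_add_mod _ _
        have hm : rnk B x % s < s := Nat.mod_lt _ hs
        rw [mul_comm i s]
        omega
    · intro x hx y hy h
      exact rnk_injOn B (Finset.mem_filter.1 hx).1 (Finset.mem_filter.1 hy).1 h
  simpa using h


/-- cell of a point -/
noncomputable def cm (s : ℕ) (p : ℝ × ℝ) : ℕ × ℕ := (ph B s p.1, ph B s p.2)

/-- same-cell off-diagonal pairs of points on a line -/
noncomputable def bigPairs (m c : ℝ) (s : ℕ) : Finset ((ℝ × ℝ) × (ℝ × ℝ)) :=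
  ((pts B m c) ×ˢ (pts B m c)).filter (fun z => z.1 ≠ z.2 ∧ cm B s z.1 = cm B s z.2)


/-- Any line visits at most `2r - 1` cells (staircase property). -/
lemma card_image_cm_le {m c : ℝ} {s r : ℕ} (hs : 0 < s) (hr : 0 < r)
    (hrs : B.card ≤ r * s) :
    ((pts B m c).image (cm B s)).card ≤ 2 * r - 1 := by
  have hphx : ∀ p ∈ pts B m c, ph B s p.1 < r := fun p hp =>
    ph_lt hs hrs (mem_pts.1 hp).1
  have hphy : ∀ p ∈ pts B m c, ph B s p.2 < r := fun p hp =>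
    ph_lt hs hrs (mem_pts.1 hp).2.1
  -- ordering along the line
  have key : ∀ p ∈ pts B m c, ∀ q ∈ pts B m c, p.1 ≤ q.1 →
      ph B s p.1 ≤ ph B s q.1 ∧
      (0 ≤ m → ph B s p.2 ≤ ph B s q.2) ∧ (m ≤ 0 → ph B s q.2 ≤ ph B s p.2) := by
    intro p hp q hq hle
    obtain ⟨_, _, hpe⟩ := mem_pts.1 hp
    obtain ⟨_, _, hqe⟩ := mem_pts.1 hq
    refine ⟨ph_mono B s hle, ?_, ?_⟩
    · intro hm
      apply ph_mono B s
      rw [hpe, hqe]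
      have := mul_le_mul_of_nonneg_left hle hm
      linarith
    · intro hm
      apply ph_mono B s
      rw [hpe, hqe]
      nlinarith
  rcases le_or_gt 0 m with hm | hm
  · refine le_trans (Finset.card_le_card_of_injOn (fun t : ℕ × ℕ => t.1 + t.2)
      (t := Finset.range (2 * r - 1)) ?_ ?_) (by simp)
    · intro t ht
      obtain ⟨p, hp, rfl⟩ := Finset.mem_image.1 ht
      have h1 := hphx p hp
      have h2 := hphy p hp
      simp only [Finset.mem_coe, Finset.mem_range, cm]
      omega
    · intro t ht u hu he
      obtain ⟨p, hp, rfl⟩ := Finset.mem_image.1 (by exact_mod_cast ht)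
      obtain ⟨q, hq, rfl⟩ := Finset.mem_image.1 (by exact_mod_cast hu)
      simp only [cm] at he ⊢
      rcases le_total p.1 q.1 with hle | hle
      · obtain ⟨ha, hb, -⟩ := key p hp q hq hle
        have := hb hm
        simp only [Prod.mk.injEq] at he ⊢
        omega
      · obtain ⟨ha, hb, -⟩ := key q hq p hp hle
        have := hb hm
        simp only [Prod.mk.injEq] at he ⊢
        omega
  · refine le_trans (Finset.card_le_card_of_injOn (fun t : ℕ × ℕ => t.1 + (r - 1 - t.2))
      (t := Finset.range (2 * r - 1)) ?_ ?_) (by simp)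
    · intro t ht
      obtain ⟨p, hp, rfl⟩ := Finset.mem_image.1 ht
      have h1 := hphx p hp
      have h2 := hphy p hp
      simp only [Finset.mem_coe, Finset.mem_range, cm]
      omega
    · intro t ht u hu he
      obtain ⟨p, hp, rfl⟩ := Finset.mem_image.1 (by exact_mod_cast ht)
      obtain ⟨q, hq, rfl⟩ := Finset.mem_image.1 (by exact_mod_cast hu)
      have h1 := hphy p hp
      have h2 := hphy q hq
      simp only [cm] at he ⊢
      rcases le_total p.1 q.1 with hle | hle
      · obtain ⟨ha, -, hb⟩ := key p hp q hq hle
        have := hb hm.le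
        simp only [Prod.mk.injEq] at he ⊢
        omega
      · obtain ⟨ha, -, hb⟩ := key q hq p hp hle
        have := hb hm.le
        simp only [Prod.mk.injEq] at he ⊢
        omega

/-- Per-line count: `N ≤ (2r-1) + (same-cell pairs on the line)`. -/
lemma card_pts_le_cells {B : Finset ℝ} {m c : ℝ} {s r : ℕ} (hs : 0 < s) (hr : 0 < r)
    (hrs : B.card ≤ r * s) :
    (pts B m c).card ≤ (2 * r - 1) + (bigPairs B m c s).card := by
  set P := pts B m c with hP
  have h1 : P.card = ∑ t ∈ P.image (cm B s), (P.filter (fun p => cm B s p = t)).card :=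
    Finset.card_eq_sum_card_image _ _
  have h2 : (bigPairs B m c s).card
      = ∑ t ∈ P.image (cm B s), ((P.filter (fun p => cm B s p = t)).offDiag).card := by
    have h3 : (bigPairs B m c s).card
        = ∑ t ∈ P.image (cm B s),
          ((bigPairs B m c s).filter (fun z => cm B s z.1 = t)).card := by
      apply Finset.card_eq_sum_card_fiberwise
      intro z hz
      simp only [bigPairs, Finset.mem_coe, Finset.mem_filter, Finset.mem_product] at hz
      exact Finset.mem_image_of_mem _ hz.1.1
    rw [h3]
    apply Finset.sum_congr rfl
    intro t ht
    congr 1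
    ext z
    simp only [bigPairs, Finset.mem_filter, Finset.mem_product, Finset.mem_offDiag]
    constructor
    · rintro ⟨⟨⟨hz1, hz2⟩, hne, hcc⟩, hc1⟩
      exact ⟨⟨hz1, hc1⟩, ⟨hz2, hcc ▸ hc1⟩, hne⟩
    · rintro ⟨⟨hz1, hc1⟩, ⟨hz2, hc2⟩, hne⟩
      exact ⟨⟨⟨hz1, hz2⟩, hne, hc1.trans hc2.symm⟩, hc1⟩
  calc P.card = ∑ t ∈ P.image (cm B s), (P.filter (fun p => cm B s p = t)).card := h1
    _ ≤ ∑ t ∈ P.image (cm B s),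
        (1 + ((P.filter (fun p => cm B s p = t)).offDiag).card) := by
        apply Finset.sum_le_sum
        intro t ht
        rw [Finset.offDiag_card]
        set a := (P.filter (fun p => cm B s p = t)).card
        rcases Nat.lt_or_ge a 2 with h | h
        · interval_cases a <;> simp
        · have h3 : 2 * a ≤ a * a := Nat.mul_le_mul_right a h
          omega
    _ = (P.image (cm B s)).card + ∑ t ∈ P.image (cm B s),
        ((P.filter (fun p => cm B s p = t)).offDiag).card := by
        rw [Finset.sum_add_distrib, Finset.sum_const, smul_eq_mul, mul_one]
    _ ≤ (2 * r - 1) + (bigPairs B m c s).card := by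
        rw [h2]
        exact Nat.add_le_add_right (card_image_cm_le B hs hr hrs) _


/-- All same-cell pairs of grid points. -/
noncomputable def totPairs (s : ℕ) : Finset ((ℝ × ℝ) × (ℝ × ℝ)) :=
  ((B ×ˢ B) ×ˢ (B ×ˢ B)).filter (fun z => cm B s z.1 = cm B s z.2)

lemma totPairs_card_le {s r : ℕ} (hs : 0 < s) (hrs : B.card ≤ r * s) :
    (totPairs B s).card ≤ r * r * (s * s * (s * s)) := by
  have h1 : (totPairs B s).card = ∑ t ∈ (Finset.range r) ×ˢ (Finset.range r),
      ((totPairs B s).filter (fun z => cm B s z.1 = t)).card := by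
    apply Finset.card_eq_sum_card_fiberwise
    intro z hz
    simp only [totPairs, Finset.mem_coe, Finset.mem_filter, Finset.mem_product] at hz
    simp only [Finset.mem_coe, Finset.mem_product, Finset.mem_range, cm]
    exact ⟨ph_lt hs hrs hz.1.1.1, ph_lt hs hrs hz.1.1.2⟩
  rw [h1]
  have h2 : ∀ t ∈ (Finset.range r) ×ˢ (Finset.range r),
      ((totPairs B s).filter (fun z => cm B s z.1 = t)).card ≤ s * s * (s * s) := by
    rintro ⟨i, j⟩ -
    set Bi := B.filter (fun x => ph B s x = i)
    set Bj := B.filter (fun x => ph B s x = j)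
    have hsub : (totPairs B s).filter (fun z => cm B s z.1 = (i, j))
        ⊆ (Bi ×ˢ Bj) ×ˢ (Bi ×ˢ Bj) := by
      intro z hz
      simp only [totPairs, Finset.mem_filter, Finset.mem_product, cm,
        Prod.mk.injEq] at hz
      obtain ⟨⟨⟨⟨h11, h12⟩, h21, h22⟩, hcc⟩, hc1, hc2⟩ := hz
      simp only [Finset.mem_product, Bi, Bj, Finset.mem_filter, Prod.mk.injEq] at hcc ⊢
      exact ⟨⟨⟨h11, hc1⟩, h12, hc2⟩, ⟨h21, hcc.1 ▸ hc1⟩, h22, hcc.2 ▸ hc2⟩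
    calc ((totPairs B s).filter (fun z => cm B s z.1 = (i, j))).card
        ≤ ((Bi ×ˢ Bj) ×ˢ (Bi ×ˢ Bj)).card := Finset.card_le_card hsub
      _ = (Bi.card * Bj.card) * (Bi.card * Bj.card) := by
          rw [Finset.card_product, Finset.card_product]
      _ ≤ s * s * (s * s) := by
          have hi := card_fiber_le B s hs i
          have hj := card_fiber_le B s hs j
          exact Nat.mul_le_mul (Nat.mul_le_mul hi hj) (Nat.mul_le_mul hi hj)
  calc ∑ t ∈ (Finset.range r) ×ˢ (Finset.range r),
      ((totPairs B s).filter (fun z => cm B s z.1 = t)).card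
      ≤ ∑ _t ∈ (Finset.range r) ×ˢ (Finset.range r), (s * s * (s * s)) :=
        Finset.sum_le_sum h2
    _ = r * r * (s * s * (s * s)) := by
        rw [Finset.sum_const, smul_eq_mul, Finset.card_product, Finset.card_range]

/-- distinct points on a common (nonvertical) line have distinct abscissas -/
lemma x_ne {m c : ℝ} {p q : ℝ × ℝ} (hp : p ∈ pts B m c) (hq : q ∈ pts B m c)
    (hne : p ≠ q) : p.1 ≠ q.1 := fun h => hne (pts_inj hp hq h)

/-- The `bigPairs` of distinct lines are disjoint, so their total is at most `totPairs`. -/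
lemma sum_bigPairs_le (L : Finset (ℝ × ℝ)) (s : ℕ) :
    ∑ ℓ ∈ L, (bigPairs B ℓ.1 ℓ.2 s).card ≤ (totPairs B s).card := by
  classical
  have hdisj : ∀ ℓ₁ ∈ L, ∀ ℓ₂ ∈ L, ℓ₁ ≠ ℓ₂ →
      Disjoint (bigPairs B ℓ₁.1 ℓ₁.2 s) (bigPairs B ℓ₂.1 ℓ₂.2 s) := by
    rintro ⟨m₁, c₁⟩ - ⟨m₂, c₂⟩ - hne
    rw [Finset.disjoint_left]
    rintro z hz₁ hz₂
    simp only [bigPairs, Finset.mem_filter, Finset.mem_product] at hz₁ hz₂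
    obtain ⟨⟨hp₁, hq₁⟩, hzne, -⟩ := hz₁
    obtain ⟨⟨hp₂, hq₂⟩, -, -⟩ := hz₂
    have hx : z.1.1 ≠ z.2.1 := x_ne B hp₁ hq₁ hzne
    obtain ⟨-, -, e₁p⟩ := mem_pts.1 hp₁
    obtain ⟨-, -, e₁q⟩ := mem_pts.1 hq₁
    obtain ⟨-, -, e₂p⟩ := mem_pts.1 hp₂
    obtain ⟨-, -, e₂q⟩ := mem_pts.1 hq₂
    have hm : m₁ = m₂ := by
      have h1 : (m₁ - m₂) * (z.1.1 - z.2.1) = 0 := by linarith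
      rcases mul_eq_zero.1 h1 with h | h
      · linarith
      · exact absurd (by linarith : z.1.1 = z.2.1) hx
    apply hne
    have hc : c₁ = c₂ := by rw [hm] at e₁p; linarith
    rw [hm, hc]
  calc ∑ ℓ ∈ L, (bigPairs B ℓ.1 ℓ.2 s).card
      = (L.biUnion (fun ℓ => bigPairs B ℓ.1 ℓ.2 s)).card :=
        (Finset.card_biUnion hdisj).symm
    _ ≤ (totPairs B s).card := by
        apply Finset.card_le_card
        intro z hz
        obtain ⟨ℓ, -, hz⟩ := Finset.mem_biUnion.1 hz
        simp only [bigPairs, Finset.mem_filter, Finset.mem_product] at hz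
        simp only [totPairs, Finset.mem_filter, Finset.mem_product]
        obtain ⟨⟨hp, hq⟩, -, hcc⟩ := hz
        obtain ⟨h1, h2, -⟩ := mem_pts.1 hp
        obtain ⟨h3, h4, -⟩ := mem_pts.1 hq
        exact ⟨⟨⟨h1, h2⟩, h3, h4⟩, hcc⟩

/-- **Rich lines bound** (Szemerédi–Trotter type, for Cartesian products):
if each line in `L` contains at least `k` grid points, `4 ≤ k ≤ |B|`, then
`k³ |L| ≤ 1024 |B|⁴`. -/
lemma rich_lines (L : Finset (ℝ × ℝ)) (k : ℕ) (h4 : 4 ≤ k) (hkn : k ≤ B.card)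
    (hL : ∀ ℓ ∈ L, k ≤ (pts B ℓ.1 ℓ.2).card) :
    k ^ 3 * L.card ≤ 1024 * B.card ^ 4 := by
  set n := B.card with hn
  set r := (k + 3) / 4 with hr
  set s := n / r + 1 with hs
  have hr0 : 0 < r := by omega
  have hs0 : 0 < s := Nat.succ_pos _
  have hrk : 4 * r ≤ k + 3 := by omega
  have hkr : k ≤ 4 * r := by omega
  have hrn : r ≤ n := by omega
  have hdm := Nat.div_add_mod n r
  have hmod : n % r < r := Nat.mod_lt _ hr0
  have hrs1 : n ≤ r * s := by
    have : r * s = r * (n / r) + r := by rw [hs, Nat.mul_add, mul_one]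
    omega
  have hrs2 : r * s ≤ 2 * n := by
    have : r * s = r * (n / r) + r := by rw [hs, Nat.mul_add, mul_one]
    omega
  -- incidences
  have hI : k * L.card ≤ ∑ ℓ ∈ L, (pts B ℓ.1 ℓ.2).card := by
    calc k * L.card = ∑ _ℓ ∈ L, k := by rw [Finset.sum_const, smul_eq_mul, mul_comm]
      _ ≤ ∑ ℓ ∈ L, (pts B ℓ.1 ℓ.2).card := Finset.sum_le_sum hL
  have hI2 : ∑ ℓ ∈ L, (pts B ℓ.1 ℓ.2).card
      ≤ (2 * r - 1) * L.card + r * r * (s * s * (s * s)) := by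
    calc ∑ ℓ ∈ L, (pts B ℓ.1 ℓ.2).card
        ≤ ∑ ℓ ∈ L, ((2 * r - 1) + (bigPairs B ℓ.1 ℓ.2 s).card) :=
          Finset.sum_le_sum (fun ℓ _ => card_pts_le_cells hs0 hr0 hrs1)
      _ = (2 * r - 1) * L.card + ∑ ℓ ∈ L, (bigPairs B ℓ.1 ℓ.2 s).card := by
          rw [Finset.sum_add_distrib, Finset.sum_const, smul_eq_mul, mul_comm]
      _ ≤ (2 * r - 1) * L.card + r * r * (s * s * (s * s)) :=
          Nat.add_le_add_left (le_trans (sum_bigPairs_le B L s) (totPairs_card_le B hs0 hrs1)) _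
  -- `4(2r-1) ≤ 3k`, hence `k·|L| ≤ 4 r² s⁴`
  have h2r : 4 * (2 * r - 1) ≤ 3 * k := by omega
  have hQ : k * L.card ≤ 4 * (r * r * (s * s * (s * s))) := by
    have h5 : 4 * (k * L.card) ≤ 4 * ((2 * r - 1) * L.card) + 4 * (r * r * (s * s * (s * s))) := by
      have := le_trans hI hI2
      omega
    have h6 : 4 * ((2 * r - 1) * L.card) ≤ 3 * (k * L.card) := by
      calc 4 * ((2 * r - 1) * L.card) = (4 * (2 * r - 1)) * L.card := by ring
        _ ≤ (3 * k) * L.card := Nat.mul_le_mul_right _ h2r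
        _ = 3 * (k * L.card) := by ring
    omega
  -- conclude
  calc k ^ 3 * L.card = k * k * (k * L.card) := by ring
    _ ≤ (4 * r) * (4 * r) * (4 * (r * r * (s * s * (s * s)))) := by
        exact Nat.mul_le_mul (Nat.mul_le_mul hkr hkr) hQ
    _ = 64 * ((r * s) * (r * s) * ((r * s) * (r * s))) := by ring
    _ ≤ 64 * ((2 * n) * (2 * n) * ((2 * n) * (2 * n))) := by
        have h8 := Nat.mul_le_mul hrs2 hrs2
        exact Nat.mul_le_mul_left _ (Nat.mul_le_mul h8 h8)
    _ = 1024 * n ^ 4 := by ring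


/-- Slope-intercept parameters of the line through two points with distinct abscissas. -/
noncomputable def lineOf (p q : ℝ × ℝ) : ℝ × ℝ :=
  ((q.2 - p.2) / (q.1 - p.1), p.2 - ((q.2 - p.2) / (q.1 - p.1)) * p.1)

/-- The finset of all lines through two grid points with distinct abscissas. -/
noncomputable def L0 : Finset (ℝ × ℝ) :=
  (((B ×ˢ B) ×ˢ (B ×ˢ B)).filter (fun z => z.1.1 ≠ z.2.1)).image
    (fun z => lineOf z.1 z.2)

lemma card_L0_le : (L0 B).card ≤ B.card ^ 4 := by
  calc (L0 B).card ≤ (((B ×ˢ B) ×ˢ (B ×ˢ B)).filter (fun z => z.1.1 ≠ z.2.1)).card :=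
        Finset.card_image_le
    _ ≤ ((B ×ˢ B) ×ˢ (B ×ˢ B)).card := Finset.card_filter_le _ _
    _ = B.card ^ 4 := by simp [Finset.card_product]; ring

/-- Collinearity equation for a triple of points. -/
def colEq (q : (ℝ × ℝ) × (ℝ × ℝ) × (ℝ × ℝ)) : Prop :=
  (q.2.1.1 - q.1.1) * (q.2.2.2 - q.2.1.2) = (q.2.1.2 - q.1.2) * (q.2.2.1 - q.2.1.1)

noncomputable instance : DecidablePred colEq := fun q => Real.decidableEq _ _

/-- The triple set: collinear triples of grid points, the first two with distinct
abscissas. -/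
noncomputable def TS : Finset ((ℝ × ℝ) × (ℝ × ℝ) × (ℝ × ℝ)) :=
  ((B ×ˢ B) ×ˢ (B ×ˢ B) ×ˢ (B ×ˢ B)).filter
    (fun q => q.1.1 ≠ q.2.1.1 ∧ colEq q)

lemma both_on_lineOf {p q : ℝ × ℝ} (h : p.1 ≠ q.1) :
    p.2 = (lineOf p q).1 * p.1 + (lineOf p q).2 ∧
    q.2 = (lineOf p q).1 * q.1 + (lineOf p q).2 := by
  have hx : q.1 - p.1 ≠ 0 := sub_ne_zero_of_ne (Ne.symm h)
  constructor
  · simp [lineOf]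
  · simp only [lineOf]
    field_simp
    ring

lemma TS_le_sum : (TS B).card ≤ ∑ ℓ ∈ L0 B, (pts B ℓ.1 ℓ.2).card ^ 3 := by
  have hmem : ∀ q ∈ TS B, lineOf q.1 q.2.1 ∈ L0 B := by
    intro q hq
    simp only [TS, Finset.mem_filter, Finset.mem_product] at hq
    apply Finset.mem_image_of_mem (fun z => lineOf z.1 z.2) (a := (q.1, q.2.1))
    simp only [Finset.mem_filter, Finset.mem_product]
    exact ⟨⟨hq.1.1, hq.1.2.1⟩, hq.2.1⟩
  have h1 : (TS B).card = ∑ ℓ ∈ L0 B, ((TS B).filter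
      (fun q => lineOf q.1 q.2.1 = ℓ)).card :=
    Finset.card_eq_sum_card_fiberwise hmem
  rw [h1]
  apply Finset.sum_le_sum
  rintro ⟨m, c⟩ hℓ
  have hsub : (TS B).filter (fun q => lineOf q.1 q.2.1 = (m, c))
      ⊆ (pts B m c) ×ˢ (pts B m c) ×ˢ (pts B m c) := by
    rintro ⟨p1, p2, p3⟩ hq
    simp only [TS, Finset.mem_filter, Finset.mem_product] at hq
    obtain ⟨⟨⟨hg1, hg2, hg3⟩, hx12, hcol⟩, hline⟩ := hq
    have hx : p2.1 - p1.1 ≠ 0 := sub_ne_zero_of_ne (Ne.symm hx12)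
    have hon := both_on_lineOf (p := p1) (q := p2) hx12
    rw [hline] at hon
    simp only at hon
    have hm : (p2.2 - p1.2) / (p2.1 - p1.1) = m := by
      have := congrArg Prod.fst hline
      simpa [lineOf] using this
    have h3 : p3.2 = m * p3.1 + c := by
      have hc : c = p1.2 - m * p1.1 := by linarith [hon.1]
      have hslope : p2.2 - p1.2 = m * (p2.1 - p1.1) := by
        rw [← hm, div_mul_cancel₀ _ hx]
      -- from colEq: (p2.1 - p1.1) * (p3.2 - p2.2) = (p2.2 - p1.2) * (p3.1 - p2.1)
      unfold colEq at hcol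
      simp only at hcol
      have h5 : p3.2 - p2.2 = m * (p3.1 - p2.1) := by
        have h6 : (p2.1 - p1.1) * (p3.2 - p2.2) = (p2.1 - p1.1) * (m * (p3.1 - p2.1)) := by
          rw [hcol, hslope]; ring
        exact mul_left_cancel₀ hx h6
      have h7 : p2.2 = m * p2.1 + c := hon.2
      linarith
    simp only [Finset.mem_product]
    refine ⟨?_, ?_, ?_⟩ <;> rw [mem_pts]
    · exact ⟨hg1.1, hg1.2, by linarith [hon.1]⟩
    · exact ⟨hg2.1, hg2.2, hon.2⟩
    · exact ⟨hg3.1, hg3.2, h3⟩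
  calc ((TS B).filter (fun q => lineOf q.1 q.2.1 = (m, c))).card
      ≤ ((pts B m c) ×ˢ (pts B m c) ×ˢ (pts B m c)).card := Finset.card_le_card hsub
    _ = (pts B m c).card ^ 3 := by simp [Finset.card_product]; ring


lemma cube_le_three_sum (N : ℕ) : N ^ 3 ≤ 3 * ∑ k ∈ Finset.Icc 1 N, k ^ 2 := by
  induction N with
  | zero => simp
  | succ n ih =>
    rw [Finset.sum_Icc_succ_top (by omega)]
    have h : (n + 1) ^ 3 ≤ n ^ 3 + 3 * (n + 1) ^ 2 := by
      have e1 : (n + 1) ^ 3 = n ^ 3 + 3 * n ^ 2 + 3 * n + 1 := by ring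
      have e2 : 3 * (n + 1) ^ 2 = 3 * n ^ 2 + 6 * n + 3 := by ring
      linarith
    omega

/-- the rich-line counting finsets -/
noncomputable def Lk (k : ℕ) : Finset (ℝ × ℝ) :=
  (L0 B).filter (fun ℓ => k ≤ (pts B ℓ.1 ℓ.2).card)

lemma sum_cubes_le :
    ∑ ℓ ∈ L0 B, (pts B ℓ.1 ℓ.2).card ^ 3
      ≤ 3 * ∑ k ∈ Finset.Icc 1 B.card, k ^ 2 * (Lk B k).card := by
  have h1 : ∀ ℓ ∈ L0 B, (pts B ℓ.1 ℓ.2).card ^ 3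
      ≤ 3 * ∑ k ∈ Finset.Icc 1 B.card, if k ≤ (pts B ℓ.1 ℓ.2).card then k ^ 2 else 0 := by
    intro ℓ _
    have h2 : (Finset.Icc 1 B.card).filter (fun k => k ≤ (pts B ℓ.1 ℓ.2).card)
        = Finset.Icc 1 ((pts B ℓ.1 ℓ.2).card) := by
      ext k
      simp only [Finset.mem_filter, Finset.mem_Icc]
      have := card_pts_le B ℓ.1 ℓ.2
      omega
    calc (pts B ℓ.1 ℓ.2).card ^ 3 ≤ 3 * ∑ k ∈ Finset.Icc 1 ((pts B ℓ.1 ℓ.2).card), k ^ 2 :=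
          cube_le_three_sum _
      _ = 3 * ∑ k ∈ Finset.Icc 1 B.card, if k ≤ (pts B ℓ.1 ℓ.2).card then k ^ 2 else 0 := by
          rw [← h2, Finset.sum_filter]
  calc ∑ ℓ ∈ L0 B, (pts B ℓ.1 ℓ.2).card ^ 3
      ≤ ∑ ℓ ∈ L0 B, 3 * ∑ k ∈ Finset.Icc 1 B.card,
          if k ≤ (pts B ℓ.1 ℓ.2).card then k ^ 2 else 0 := Finset.sum_le_sum h1
    _ = 3 * ∑ k ∈ Finset.Icc 1 B.card, ∑ ℓ ∈ L0 B,
          if k ≤ (pts B ℓ.1 ℓ.2).card then k ^ 2 else 0 := by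
          rw [← Finset.mul_sum, Finset.sum_comm]
    _ = 3 * ∑ k ∈ Finset.Icc 1 B.card, k ^ 2 * (Lk B k).card := by
          congr 1
          apply Finset.sum_congr rfl
          intro k _
          rw [← Finset.sum_filter]
          simp [Lk, Finset.sum_const, mul_comm]

lemma sum_inv_le_log (n : ℕ) :
    ∑ k ∈ Finset.Icc 2 n, (1 : ℝ) / k ≤ Real.log n := by
  induction n with
  | zero => simp
  | succ n ih =>
    rcases Nat.lt_or_ge n 1 with h | h
    · interval_cases n <;> simp
    · rw [Finset.sum_Icc_succ_top (by omega)]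
      have hlog : Real.log n + 1 / (n + 1) ≤ Real.log (n + 1) := by
        have hn0 : (0 : ℝ) < n := by exact_mod_cast h
        have hn1 : (0 : ℝ) < (n : ℝ) + 1 := by linarith
        have h2 : Real.log ((n : ℝ) / (n + 1)) ≤ (n : ℝ) / (n + 1) - 1 :=
          Real.log_le_sub_one_of_pos (by positivity)
        have h3 : Real.log ((n : ℝ) / (n + 1)) = Real.log n - Real.log (n + 1) :=
          Real.log_div (ne_of_gt hn0) (ne_of_gt hn1)
        have h4 : (n : ℝ) / (n + 1) - 1 = -(1 / (n + 1)) := by field_simp; ring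
        rw [h3, h4] at h2
        linarith
      push_cast
      push_cast at ih hlog
      linarith

/-- Real-valued bound for the triple count. -/
lemma TS_bound :
    ((TS B).card : ℝ) ≤ 192 * (B.card : ℝ) ^ 4 + 3072 * (B.card : ℝ) ^ 4 * Real.log B.card := by
  set n := B.card with hn
  -- ℕ-valued start
  have h0 : ((TS B).card : ℝ) ≤ 3 * ∑ k ∈ Finset.Icc 1 n, (k : ℝ) ^ 2 * ((Lk B k).card : ℝ) := by
    have := le_trans (TS_le_sum B) (sum_cubes_le B)
    calc ((TS B).card : ℝ)
        ≤ ((3 * ∑ k ∈ Finset.Icc 1 n, k ^ 2 * (Lk B k).card : ℕ) : ℝ) := by exact_mod_cast this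
      _ = 3 * ∑ k ∈ Finset.Icc 1 n, (k : ℝ) ^ 2 * ((Lk B k).card : ℝ) := by push_cast; ring
  -- split the sum at k ≤ 4
  have hsplit : ∑ k ∈ Finset.Icc 1 n, (k : ℝ) ^ 2 * ((Lk B k).card : ℝ)
      = (∑ k ∈ (Finset.Icc 1 n).filter (fun k => k ≤ 4), (k : ℝ) ^ 2 * ((Lk B k).card : ℝ))
      + (∑ k ∈ (Finset.Icc 1 n).filter (fun k => ¬ k ≤ 4), (k : ℝ) ^ 2 * ((Lk B k).card : ℝ)) :=
    (Finset.sum_filter_add_sum_filter_not _ _ _).symm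
  have hsmall : ∑ k ∈ (Finset.Icc 1 n).filter (fun k => k ≤ 4), (k : ℝ) ^ 2 * ((Lk B k).card : ℝ)
      ≤ 64 * (n : ℝ) ^ 4 := by
    have hterm : ∀ k ∈ (Finset.Icc 1 n).filter (fun k => k ≤ 4),
        (k : ℝ) ^ 2 * ((Lk B k).card : ℝ) ≤ 16 * (n : ℝ) ^ 4 := by
      intro k hk
      simp only [Finset.mem_filter, Finset.mem_Icc] at hk
      have hLk : (Lk B k).card ≤ n ^ 4 := le_trans (Finset.card_filter_le _ _) (card_L0_le B)
      have h1 : ((Lk B k).card : ℝ) ≤ (n : ℝ) ^ 4 := by exact_mod_cast hLk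
      have h2 : ((k : ℝ)) ^ 2 ≤ 16 := by
        have : (k : ℝ) ≤ 4 := by exact_mod_cast hk.2
        nlinarith [hk, Nat.cast_nonneg (α := ℝ) k]
      nlinarith [Nat.cast_nonneg (α := ℝ) ((Lk B k).card), pow_nonneg (Nat.cast_nonneg (α := ℝ) n) 4]
    calc ∑ k ∈ (Finset.Icc 1 n).filter (fun k => k ≤ 4), (k : ℝ) ^ 2 * ((Lk B k).card : ℝ)
        ≤ ∑ _k ∈ (Finset.Icc 1 n).filter (fun k => k ≤ 4), 16 * (n : ℝ) ^ 4 :=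
          Finset.sum_le_sum hterm
      _ = (((Finset.Icc 1 n).filter (fun k => k ≤ 4)).card : ℝ) * (16 * (n : ℝ) ^ 4) := by
          rw [Finset.sum_const, nsmul_eq_mul]
      _ ≤ 4 * (16 * (n : ℝ) ^ 4) := by
          have hc : ((Finset.Icc 1 n).filter (fun k => k ≤ 4)).card ≤ 4 := by
            calc ((Finset.Icc 1 n).filter (fun k => k ≤ 4)).card
                ≤ (Finset.Icc 1 4).card := by
                  apply Finset.card_le_card
                  intro k hk
                  simp only [Finset.mem_filter, Finset.mem_Icc] at hk ⊢
                  omega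
              _ = 4 := by simp
          have : (((Finset.Icc 1 n).filter (fun k => k ≤ 4)).card : ℝ) ≤ 4 := by exact_mod_cast hc
          nlinarith [pow_nonneg (Nat.cast_nonneg (α := ℝ) n) 4]
      _ = 64 * (n : ℝ) ^ 4 := by ring
  have hbig : ∑ k ∈ (Finset.Icc 1 n).filter (fun k => ¬ k ≤ 4), (k : ℝ) ^ 2 * ((Lk B k).card : ℝ)
      ≤ 1024 * (n : ℝ) ^ 4 * Real.log n := by
    have hterm : ∀ k ∈ (Finset.Icc 1 n).filter (fun k => ¬ k ≤ 4),
        (k : ℝ) ^ 2 * ((Lk B k).card : ℝ) ≤ (1024 * (n : ℝ) ^ 4) * (1 / k) := by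
      intro k hk
      simp only [Finset.mem_filter, Finset.mem_Icc] at hk
      have h5 : 4 ≤ k := by omega
      have hkn : k ≤ n := hk.1.2
      have hrich := rich_lines B (Lk B k) k h5 hkn
        (fun ℓ hℓ => (Finset.mem_filter.1 hℓ).2)
      have hk0 : (0 : ℝ) < (k : ℝ) := by exact_mod_cast (by omega : 0 < k)
      have hrichR : (k : ℝ) ^ 3 * ((Lk B k).card : ℝ) ≤ 1024 * (n : ℝ) ^ 4 := by
        exact_mod_cast hrich
      have key : (1024 * (n : ℝ) ^ 4) * (1 / k) - (k : ℝ) ^ 2 * ((Lk B k).card : ℝ)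
          = ((1024 * (n : ℝ) ^ 4) - (k : ℝ) ^ 3 * ((Lk B k).card : ℝ)) / k := by
        field_simp
      have h9 : (0 : ℝ) ≤ ((1024 * (n : ℝ) ^ 4) - (k : ℝ) ^ 3 * ((Lk B k).card : ℝ)) / k := by
        apply div_nonneg _ hk0.le
        linarith
      rw [← sub_nonneg, key]
      exact h9
    have hsum1 : ∑ k ∈ (Finset.Icc 1 n).filter (fun k => ¬ k ≤ 4),
        (k : ℝ) ^ 2 * ((Lk B k).card : ℝ)
        ≤ ∑ k ∈ (Finset.Icc 1 n).filter (fun k => ¬ k ≤ 4), (1024 * (n : ℝ) ^ 4) * (1 / k) :=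
      Finset.sum_le_sum hterm
    have hsum2 : ∑ k ∈ (Finset.Icc 1 n).filter (fun k => ¬ k ≤ 4), (1 : ℝ) / k
        ≤ ∑ k ∈ Finset.Icc 2 n, (1 : ℝ) / k := by
      apply Finset.sum_le_sum_of_subset_of_nonneg
      · intro k hk
        simp only [Finset.mem_filter, Finset.mem_Icc] at hk ⊢
        omega
      · intro k _ _
        positivity
    have hlog := sum_inv_le_log n
    have hn4 : (0 : ℝ) ≤ 1024 * (n : ℝ) ^ 4 := by positivity
    calc ∑ k ∈ (Finset.Icc 1 n).filter (fun k => ¬ k ≤ 4), (k : ℝ) ^ 2 * ((Lk B k).card : ℝ)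
        ≤ ∑ k ∈ (Finset.Icc 1 n).filter (fun k => ¬ k ≤ 4), (1024 * (n : ℝ) ^ 4) * (1 / k) :=
          hsum1
      _ = (1024 * (n : ℝ) ^ 4) * ∑ k ∈ (Finset.Icc 1 n).filter (fun k => ¬ k ≤ 4), (1 : ℝ) / k := by
          rw [Finset.mul_sum]
      _ ≤ (1024 * (n : ℝ) ^ 4) * Real.log n :=
          mul_le_mul_of_nonneg_left (le_trans hsum2 hlog) hn4
      _ = 1024 * (n : ℝ) ^ 4 * Real.log n := by ring
  calc ((TS B).card : ℝ)
      ≤ 3 * ∑ k ∈ Finset.Icc 1 n, (k : ℝ) ^ 2 * ((Lk B k).card : ℝ) := h0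
    _ ≤ 3 * (64 * (n : ℝ) ^ 4 + 1024 * (n : ℝ) ^ 4 * Real.log n) := by
        rw [hsplit]
        linarith [hsmall, hbig]
    _ = 192 * (n : ℝ) ^ 4 + 3072 * (n : ℝ) ^ 4 * Real.log n := by ring


/-- key identity: `c⁻¹ - b⁻¹ = X(0,a,b,c) · (b⁻¹ - a⁻¹)`. -/
lemma crossRatio_identity {a b c : ℝ} (ha : a ≠ 0) (hb : b ≠ 0) (hc : c ≠ 0)
    (hab : a ≠ b) :
    crossRatio 0 a b c * (b⁻¹ - a⁻¹) = c⁻¹ - b⁻¹ := by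
  have hab' : a - b ≠ 0 := sub_ne_zero_of_ne hab
  unfold crossRatio
  field_simp
  ring


end E1Aux

open E1Aux in
/-- **Bound on the energy `E₁(A)`.** There is an absolute constant `C > 0` such that for
every finite `A ⊆ ℝ` with `|A| ≥ 2`, the number of 6-tuples `(a₁,a₂,a₃,b₁,b₂,b₃) ∈ A⁶`
with `0,a₁,a₂,a₃` pairwise distinct, `0,b₁,b₂,b₃` pairwise distinct and
`X(0,a₁,a₂,a₃) = X(0,b₁,b₂,b₃)` is at most `C·|A|⁴·log|A|`. -/
theorem energy_E1_bound :
    ∃ C : ℝ, 0 < C ∧ ∀ A : Finset ℝ, 2 ≤ A.card →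
      (((A ×ˢ A ×ˢ A ×ˢ A ×ˢ A ×ˢ A).filter
          (fun t : ℝ × ℝ × ℝ × ℝ × ℝ × ℝ =>
            (t.1 ≠ 0 ∧ t.2.1 ≠ 0 ∧ t.2.2.1 ≠ 0 ∧
              t.1 ≠ t.2.1 ∧ t.1 ≠ t.2.2.1 ∧ t.2.1 ≠ t.2.2.1) ∧
            (t.2.2.2.1 ≠ 0 ∧ t.2.2.2.2.1 ≠ 0 ∧ t.2.2.2.2.2 ≠ 0 ∧
              t.2.2.2.1 ≠ t.2.2.2.2.1 ∧ t.2.2.2.1 ≠ t.2.2.2.2.2 ∧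
              t.2.2.2.2.1 ≠ t.2.2.2.2.2) ∧
            crossRatio 0 t.1 t.2.1 t.2.2.1 =
              crossRatio 0 t.2.2.2.1 t.2.2.2.2.1 t.2.2.2.2.2)).card : ℝ) ≤
        C * (A.card : ℝ) ^ 4 * Real.log (A.card : ℝ) := by
  classical
  refine ⟨4000, by norm_num, ?_⟩
  intro A hA
  set F := (A ×ˢ A ×ˢ A ×ˢ A ×ˢ A ×ˢ A).filter
      (fun t : ℝ × ℝ × ℝ × ℝ × ℝ × ℝ =>
        (t.1 ≠ 0 ∧ t.2.1 ≠ 0 ∧ t.2.2.1 ≠ 0 ∧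
          t.1 ≠ t.2.1 ∧ t.1 ≠ t.2.2.1 ∧ t.2.1 ≠ t.2.2.1) ∧
        (t.2.2.2.1 ≠ 0 ∧ t.2.2.2.2.1 ≠ 0 ∧ t.2.2.2.2.2 ≠ 0 ∧
          t.2.2.2.1 ≠ t.2.2.2.2.1 ∧ t.2.2.2.1 ≠ t.2.2.2.2.2 ∧
          t.2.2.2.2.1 ≠ t.2.2.2.2.2) ∧
        crossRatio 0 t.1 t.2.1 t.2.2.1 =
          crossRatio 0 t.2.2.2.1 t.2.2.2.2.1 t.2.2.2.2.2) with hF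
  set B : Finset ℝ := (A.erase 0).image (fun x => x⁻¹) with hB
  -- step 1 : F injects into TS B
  have hstep1 : F.card ≤ (TS B).card := by
    apply Finset.card_le_card_of_injOn
      (fun t : ℝ × ℝ × ℝ × ℝ × ℝ × ℝ =>
        ((t.1⁻¹, t.2.2.2.1⁻¹), (t.2.1⁻¹, t.2.2.2.2.1⁻¹), (t.2.2.1⁻¹, t.2.2.2.2.2⁻¹)))
    · rintro ⟨a1, a2, a3, b1, b2, b3⟩ ht
      rw [hF, Finset.mem_coe, Finset.mem_filter] at ht
      obtain ⟨hmem, ⟨ha1, ha2, ha3, h12, h13, h23⟩, ⟨hb1, hb2, hb3, g12, g13, g23⟩, hcr⟩ := ht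
      simp only [Finset.mem_product] at hmem
      obtain ⟨m1, m2, m3, m4, m5, m6⟩ := hmem
      have hBmem : ∀ x : ℝ, x ∈ A → x ≠ 0 → x⁻¹ ∈ B := by
        intro x hx hx0
        rw [hB]
        exact Finset.mem_image_of_mem _ (Finset.mem_erase.2 ⟨hx0, hx⟩)
      simp only [TS, Finset.mem_coe, Finset.mem_filter, Finset.mem_product]
      refine ⟨⟨⟨hBmem _ m1 ha1, hBmem _ m4 hb1⟩, ⟨hBmem _ m2 ha2, hBmem _ m5 hb2⟩,
        hBmem _ m3 ha3, hBmem _ m6 hb3⟩, ?_, ?_⟩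
      · simp only [ne_eq, inv_inj]
        exact h12
      · show (a2⁻¹ - a1⁻¹) * (b3⁻¹ - b2⁻¹) = (b2⁻¹ - b1⁻¹) * (a3⁻¹ - a2⁻¹)
        have k1 := crossRatio_identity ha1 ha2 ha3 h12
        have k2 := crossRatio_identity hb1 hb2 hb3 g12
        rw [← hcr] at k2
        rw [← k1, ← k2]
        ring
    · rintro ⟨a1, a2, a3, b1, b2, b3⟩ - ⟨a1', a2', a3', b1', b2', b3'⟩ - h
      simp only [Prod.mk.injEq] at h
      obtain ⟨⟨e1, e4⟩, ⟨e2, e5⟩, e3, e6⟩ := h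
      simp only [Prod.mk.injEq]
      exact ⟨inv_inj.1 e1, inv_inj.1 e2, inv_inj.1 e3, inv_inj.1 e4,
        inv_inj.1 e5, inv_inj.1 e6⟩
  -- step 2 : numerics
  have hBA : B.card ≤ A.card := le_trans Finset.card_image_le (Finset.card_erase_le)
  have hB1 : 1 ≤ B.card := by
    have h1 : 1 ≤ (A.erase 0).card := by
      have := Finset.pred_card_le_card_erase (a := (0:ℝ)) (s := A)
      omega
    obtain ⟨x, hx⟩ := Finset.card_pos.1 h1
    exact Finset.card_pos.2 ⟨x⁻¹, Finset.mem_image_of_mem _ hx⟩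
  have hbR : (1 : ℝ) ≤ (B.card : ℝ) := by exact_mod_cast hB1
  have hnR : (2 : ℝ) ≤ (A.card : ℝ) := by exact_mod_cast hA
  have hban : (B.card : ℝ) ≤ (A.card : ℝ) := by exact_mod_cast hBA
  have hlogb : (0 : ℝ) ≤ Real.log B.card := Real.log_nonneg hbR
  have hlogmono : Real.log B.card ≤ Real.log A.card :=
    Real.log_le_log (by linarith) hban
  have hlogn : Real.log 2 ≤ Real.log A.card :=
    Real.log_le_log (by norm_num) hnR
  have hlog2 : (0.6931471803 : ℝ) < Real.log 2 := Real.log_two_gt_d9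
  have hpow : (B.card : ℝ) ^ 4 ≤ (A.card : ℝ) ^ 4 := by
    apply pow_le_pow_left₀ (by linarith) hban
  have hnn : (0 : ℝ) ≤ (A.card : ℝ) ^ 4 := by positivity
  calc (F.card : ℝ) ≤ ((TS B).card : ℝ) := by exact_mod_cast hstep1
    _ ≤ 192 * (B.card : ℝ) ^ 4 + 3072 * (B.card : ℝ) ^ 4 * Real.log B.card := TS_bound B
    _ ≤ 192 * (A.card : ℝ) ^ 4 + 3072 * (A.card : ℝ) ^ 4 * Real.log A.card := by
        have t1 : 192 * (B.card : ℝ) ^ 4 ≤ 192 * (A.card : ℝ) ^ 4 := by linarith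
        have t2 : 3072 * (B.card : ℝ) ^ 4 * Real.log B.card
            ≤ 3072 * (A.card : ℝ) ^ 4 * Real.log A.card := by
          apply mul_le_mul (by linarith) hlogmono hlogb (by linarith)
        linarith
    _ ≤ 300 * (A.card : ℝ) ^ 4 * Real.log A.card
        + 3072 * (A.card : ℝ) ^ 4 * Real.log A.card := by
        have t3 : 192 * (A.card : ℝ) ^ 4 ≤ 300 * (A.card : ℝ) ^ 4 * Real.log A.card := by
          have : (192 : ℝ) ≤ 300 * Real.log A.card := by nlinarith
          nlinarith
        linarith
    _ = 3372 * (A.card : ℝ) ^ 4 * Real.log A.card := by ring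
    _ ≤ 4000 * (A.card : ℝ) ^ 4 * Real.log A.card := by
        have : (0 : ℝ) ≤ (A.card : ℝ) ^ 4 * Real.log A.card := by nlinarith
        nlinarith
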